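/- Every automorphism φ of F₂ such that φ(a) and φ(b) are positive words and φ(κ) is conjugate in F₂ to κ can be written as φ = c_g ∘ ψ, where ψ is a finite composition of copies of T̂₁ and T̂₂ and c_g is the inner automorphism x ↦ g·x·g⁻¹ for some element g of F₂. -/

import Mathlib

/-- The free group on two generators. -/
abbrev F2 := FreeGroup (Fin 2)

/-- The first generator `a` of `F₂`. -/
def a : F2 := FreeGroup.of 0

/-- The second generator `b` of `F₂`. -/
def b : F2 := FreeGroup.of 1

/-- The commutator `κ = a·b·a⁻¹·b⁻¹`. -/
def kappa : F2 := a * b * a⁻¹ * b⁻¹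

/-- An element of `F₂` is a positive word if it lies in the submonoid generated by the
generators `a` and `b`. -/
def IsPositiveWord (x : F2) : Prop := x ∈ Submonoid.closure ({a, b} : Set F2)

/-- The endomorphism `T̂₁` of `F₂` determined by `a ↦ a·b`, `b ↦ b`. -/
def T1hat : Monoid.End F2 := FreeGroup.lift fun i => if i = 0 then a * b else b

/-- The endomorphism `T̂₂` of `F₂` determined by `a ↦ a`, `b ↦ b·a`. -/
def T2hat : Monoid.End F2 := FreeGroup.lift fun i => if i = 0 then a else b * a

namespace AuxFG

open FreeGroup List

abbrev Lw := List (Fin 2 × Bool)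

def IsRed (L : Lw) : Prop := List.Chain' (fun x y => ¬(x.1 = y.1 ∧ x.2 = !y.2)) L

lemma reduce_eq_self {L : Lw} (h : IsRed L) : FreeGroup.reduce L = L := by
  induction L with
  | nil => rfl
  | cons x L ih =>
    have hL : IsRed L := h.tail
    rw [reduce.cons, ih hL]
    cases L with
    | nil => rfl
    | cons y t =>
      have hxy := (List.isChain_cons_cons.mp h).1
      simp only [hxy, if_false]

lemma isRed_reduce (L : Lw) : IsRed (FreeGroup.reduce L) := by
  induction L with
  | nil => exact List.isChain_nil
  | cons x L ih =>
    rw [reduce.cons]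
    cases hc : FreeGroup.reduce L with
    | nil => exact List.isChain_singleton _
    | cons y t =>
      rw [hc] at ih
      by_cases hxy : x.1 = y.1 ∧ x.2 = !y.2
      · simp only [hxy, and_self, if_true]
        exact ih.tail
      · simp only [hxy, if_false]
        exact List.isChain_cons_cons.mpr ⟨hxy, ih⟩

lemma toWord_mk_red {L : Lw} (h : IsRed L) : (FreeGroup.mk L).toWord = L := by
  rw [toWord_mk, reduce_eq_self h]

lemma isRed_toWord (x : F2) : IsRed x.toWord := by
  rw [← reduce_toWord]; exact isRed_reduce _

/-- the word of a positive list of letters -/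
def wd (l : List (Fin 2)) : Lw := l.map (fun i => (i, true))

def pos (l : List (Fin 2)) : F2 := FreeGroup.mk (wd l)

lemma wd_append (l₁ l₂ : List (Fin 2)) : wd (l₁ ++ l₂) = wd l₁ ++ wd l₂ :=
  List.map_append

lemma pos_append (l₁ l₂ : List (Fin 2)) : pos (l₁ ++ l₂) = pos l₁ * pos l₂ := by
  rw [pos, wd_append, ← mul_mk]; rfl

lemma pos_nil : pos [] = 1 := rfl

lemma pos_singleton (i : Fin 2) : pos [i] = FreeGroup.of i := rfl

lemma snd_wd {p : Fin 2 × Bool} {l : List (Fin 2)} (h : p ∈ wd l) : p.2 = true := by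
  rcases List.mem_map.mp h with ⟨i, _, rfl⟩; rfl

lemma isRed_wd (l : List (Fin 2)) : IsRed (wd l) := by
  apply List.Pairwise.isChain
  apply List.pairwise_of_forall_mem_list
  intro x hx y hy
  rw [snd_wd hx, snd_wd hy]
  simp

def nf (p : Fin 2 × Bool) : Fin 2 × Bool := (p.1, !p.2)

lemma invRev_eq_map_nf (L : Lw) : invRev L = (L.map nf).reverse := rfl

lemma invRev_cons (p : Fin 2 × Bool) (L : Lw) :
    invRev (p :: L) = invRev L ++ [nf p] := by
  simp [invRev_eq_map_nf]

lemma invRev_append (L₁ L₂ : Lw) : invRev (L₁ ++ L₂) = invRev L₂ ++ invRev L₁ := by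
  simp [invRev_eq_map_nf]

lemma invRev_singleton (p : Fin 2 × Bool) : invRev [p] = [nf p] := rfl

lemma snd_invRev_wd {p : Fin 2 × Bool} {l : List (Fin 2)} (h : p ∈ invRev (wd l)) :
    p.2 = false := by
  rw [invRev_eq_map_nf] at h
  rcases List.mem_map.mp (List.mem_reverse.mp h) with ⟨q, hq, rfl⟩
  simp [nf, snd_wd hq]

lemma isRed_invRev_wd (l : List (Fin 2)) : IsRed (invRev (wd l)) := by
  apply List.Pairwise.isChain
  apply List.pairwise_of_forall_mem_list
  intro x hx y hy
  rw [snd_invRev_wd hx, snd_invRev_wd hy]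
  simp

lemma mk_invRev (L : Lw) : FreeGroup.mk (invRev L) = (FreeGroup.mk L)⁻¹ :=
  (inv_mk).symm

lemma mk_cancel (p : Fin 2 × Bool) : FreeGroup.mk [p, nf p] = 1 := by
  have : FreeGroup.reduce [p, nf p] = [] := by
    simp [reduce.cons, reduce_singleton, nf]
  rw [← reduce.self (L := [p, nf p]), this]; rfl

lemma nf_nf (p : Fin 2 × Bool) : nf (nf p) = p := by simp [nf]


def kw : Lw := [(0,true),(1,true),(0,false),(1,false)]
def r1 : Lw := [(1,true),(0,false),(1,false),(0,true)]
def r2 : Lw := [(0,false),(1,false),(0,true),(1,true)]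
def r3 : Lw := [(1,false),(0,true),(1,true),(0,false)]
def rots : List Lw := [kw, r1, r2, r3]

lemma kappa_mk : kappa = FreeGroup.mk kw := by decide

lemma toWord_kappa : kappa.toWord = kw := by
  rw [kappa_mk]
  exact toWord_mk_red (by simp [IsRed, List.Chain', kw, List.isChain_cons_cons, List.isChain_singleton])

lemma rel_iff : ∀ x y : Fin 2 × Bool, (¬(x.1 = y.1 ∧ x.2 = !y.2)) ↔ y ≠ nf x := by decide

lemma mk_sandwich (p : Fin 2 × Bool) (M : Lw) :
    FreeGroup.mk ([p] ++ M ++ [nf p]) = FreeGroup.mk [p] * FreeGroup.mk M * (FreeGroup.mk [p])⁻¹ := by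
  rw [inv_mk, invRev_singleton, mul_mk, mul_mk, List.append_assoc]

lemma conj_struct_aux : ∀ (n : ℕ) (g : F2), g.toWord.length ≤ n →
    ∃ t ρ, ρ ∈ rots ∧ (g * kappa * g⁻¹).toWord = t ++ ρ ++ invRev t := by
  intro n
  induction n with
  | zero =>
    intro g hg
    have hg1 : g = 1 := toWord_eq_nil_iff.mp (List.length_eq_zero_iff.mp (Nat.le_zero.mp hg))
    subst hg1
    exact ⟨[], kw, by simp [rots], by simpa [invRev] using toWord_kappa⟩
  | succ n ih =>
    intro g hg
    cases hW : g.toWord with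
    | nil =>
      have hg1 : g = 1 := toWord_eq_nil_iff.mp hW
      subst hg1
      exact ⟨[], kw, by simp [rots], by simpa [invRev] using toWord_kappa⟩
    | cons ℓ rest =>
      have hg1 : g = FreeGroup.mk (ℓ :: rest) := by rw [← hW, mk_toWord]
      have hred : IsRed (ℓ :: rest) := hW ▸ isRed_toWord g
      have hrest : (FreeGroup.mk rest).toWord = rest := toWord_mk_red hred.tail
      obtain ⟨t, ρ, hρ, hX⟩ := ih (FreeGroup.mk rest)
        (by rw [hrest]; have h2 : g.toWord.length ≤ n+1 := hg; rw [hW] at h2; simpa using h2)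
      have hXmk : FreeGroup.mk rest * kappa * (FreeGroup.mk rest)⁻¹
          = FreeGroup.mk (t ++ ρ ++ invRev t) := by rw [← hX, mk_toWord]
      have hgX : g * kappa * g⁻¹
          = FreeGroup.mk [ℓ] * FreeGroup.mk (t ++ ρ ++ invRev t) * FreeGroup.mk [nf ℓ] := by
        have h1 : FreeGroup.mk (ℓ :: rest) = FreeGroup.mk [ℓ] * FreeGroup.mk rest := by
          rw [mul_mk]; rfl
        have h2 : FreeGroup.mk [nf ℓ] = (FreeGroup.mk [ℓ])⁻¹ := by
          rw [← mk_invRev, invRev_singleton]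
        rw [hg1, h1, h2, ← hXmk]; group
      have hWred : IsRed (t ++ ρ ++ invRev t) := hX ▸ isRed_toWord _
      have hρ4 : ρ = kw ∨ ρ = r1 ∨ ρ = r2 ∨ ρ = r3 := by simpa [rots] using hρ
      have hρne : ρ ≠ [] := by rcases hρ4 with rfl|rfl|rfl|rfl <;> simp [kw, r1, r2, r3]
      have hWne : (t ++ ρ ++ invRev t) ≠ [] := by
        intro h; apply hρne
        rcases List.append_eq_nil_iff.mp h with ⟨h1, -⟩
        exact (List.append_eq_nil_iff.mp h1).2
      by_cases hC1 : (t ++ ρ ++ invRev t).head? = some (nf ℓ)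
      · cases t with
        | cons h0 t' =>
          have hh0 : h0 = nf ℓ := by
            have h3 : (((h0 :: t') ++ ρ ++ invRev (h0 :: t'))).head? = some h0 := by simp
            rw [hC1] at h3; exact Option.some_inj.mp h3.symm
          refine ⟨t', ρ, hρ, ?_⟩
          have hmid : (h0 :: t') ++ ρ ++ invRev (h0 :: t')
              = [h0] ++ (t' ++ ρ ++ invRev t') ++ [nf h0] := by
            simp [invRev_cons]
          have he : g * kappa * g⁻¹ = FreeGroup.mk (t' ++ ρ ++ invRev t') := by
            rw [hgX, hmid, mk_sandwich]
            have h2 : FreeGroup.mk [nf ℓ] = (FreeGroup.mk [ℓ])⁻¹ := by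
              rw [← mk_invRev, invRev_singleton]
            rw [hh0, h2]; group
          have hmidred : IsRed (t' ++ ρ ++ invRev t') :=
            List.IsChain.infix hWred ⟨[h0], [nf h0], hmid.symm⟩
          rw [he, toWord_mk_red hmidred]
        | nil =>
          have hρhead : ρ.head? = some (nf ℓ) := by simpa [invRev] using hC1
          have he : g * kappa * g⁻¹ = FreeGroup.mk ([ℓ] ++ ρ ++ [nf ℓ]) := by
            rw [hgX, mul_mk, mul_mk]; simp [invRev]
          rcases hρ4 with rfl|rfl|rfl|rfl
          · have h5 : nf ℓ = ((0 : Fin 2), true) := (Option.some_inj.mp (by simpa [kw] using hρhead.symm))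
            have h6 : ℓ = ((0 : Fin 2), false) := by rw [← nf_nf ℓ, h5]; rfl
            refine ⟨[], r1, by simp [rots], ?_⟩
            rw [he, h6, toWord_mk]; decide
          · have h5 : nf ℓ = ((1 : Fin 2), true) := (Option.some_inj.mp (by simpa [r1] using hρhead.symm))
            have h6 : ℓ = ((1 : Fin 2), false) := by rw [← nf_nf ℓ, h5]; rfl
            refine ⟨[], r2, by simp [rots], ?_⟩
            rw [he, h6, toWord_mk]; decide
          · have h5 : nf ℓ = ((0 : Fin 2), false) := (Option.some_inj.mp (by simpa [r2] using hρhead.symm))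
            have h6 : ℓ = ((0 : Fin 2), true) := by rw [← nf_nf ℓ, h5]; rfl
            refine ⟨[], r3, by simp [rots], ?_⟩
            rw [he, h6, toWord_mk]; decide
          · have h5 : nf ℓ = ((1 : Fin 2), false) := (Option.some_inj.mp (by simpa [r3] using hρhead.symm))
            have h6 : ℓ = ((1 : Fin 2), true) := by rw [← nf_nf ℓ, h5]; rfl
            refine ⟨[], kw, by simp [rots], ?_⟩
            rw [he, h6, toWord_mk]; decide
      · by_cases hC2 : (t ++ ρ ++ invRev t).getLast? = some ℓ
        · cases t with
          | cons h0 t' =>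
            exfalso
            have h3 : ((h0 :: t') ++ ρ ++ invRev (h0 :: t')).getLast? = some (nf h0) := by
              rw [invRev_cons, ← List.append_assoc]
              exact List.getLast?_concat
            rw [hC2] at h3
            have h4 : ℓ = nf h0 := Option.some_inj.mp h3
            apply hC1
            have h5 : (((h0 :: t') ++ ρ ++ invRev (h0 :: t'))).head? = some h0 := by simp
            rw [h5, h4, nf_nf]
          | nil =>
            have hρlast : ρ.getLast? = some ℓ := by simpa [invRev] using hC2
            have he : g * kappa * g⁻¹ = FreeGroup.mk ([ℓ] ++ ρ ++ [nf ℓ]) := by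
              rw [hgX, mul_mk, mul_mk]; simp [invRev]
            rcases hρ4 with rfl|rfl|rfl|rfl
            · have h6 : ℓ = ((1 : Fin 2), false) := Option.some_inj.mp (by simpa [kw] using hρlast.symm)
              refine ⟨[], r3, by simp [rots], ?_⟩
              rw [he, h6, toWord_mk]; decide
            · have h6 : ℓ = ((0 : Fin 2), true) := Option.some_inj.mp (by simpa [r1] using hρlast.symm)
              refine ⟨[], kw, by simp [rots], ?_⟩
              rw [he, h6, toWord_mk]; decide
            · have h6 : ℓ = ((1 : Fin 2), true) := Option.some_inj.mp (by simpa [r2] using hρlast.symm)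
              refine ⟨[], r1, by simp [rots], ?_⟩
              rw [he, h6, toWord_mk]; decide
            · have h6 : ℓ = ((0 : Fin 2), false) := Option.some_inj.mp (by simpa [r3] using hρlast.symm)
              refine ⟨[], r2, by simp [rots], ?_⟩
              rw [he, h6, toWord_mk]; decide
        · -- no cancellation
          refine ⟨ℓ :: t, ρ, hρ, ?_⟩
          have he : g * kappa * g⁻¹ = FreeGroup.mk ([ℓ] ++ (t ++ ρ ++ invRev t) ++ [nf ℓ]) := by
            rw [hgX, mul_mk, mul_mk, List.append_assoc]
          obtain ⟨w0, W', hW0⟩ := List.exists_cons_of_ne_nil hWne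
          have hbig : IsRed ([ℓ] ++ (t ++ ρ ++ invRev t) ++ [nf ℓ]) := by
            rw [List.append_assoc]
            rw [IsRed, List.Chain', List.isChain_append]
            refine ⟨List.isChain_singleton _, ?_, ?_⟩
            · rw [List.isChain_append]
              refine ⟨hWred, List.isChain_singleton _, ?_⟩
              intro x hx y hy
              simp only [List.head?_cons, Option.mem_def, Option.some_inj] at hy
              subst hy
              rw [rel_iff]
              intro hcon
              have hlx : ℓ = x := by rw [← nf_nf ℓ, hcon, nf_nf]
              apply hC2
              rw [Option.mem_def] at hx
              rw [hlx]
              exact hx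
            · intro x hx y hy
              simp only [List.getLast?_singleton, Option.mem_def, Option.some_inj] at hx
              subst hx
              rw [hW0, List.cons_append, List.head?_cons, Option.mem_def, Option.some_inj] at hy
              subst hy
              rw [rel_iff]
              intro hcon
              apply hC1
              rw [hW0, List.head?_cons, hcon]
          rw [he, toWord_mk_red hbig]
          simp [invRev_cons]

lemma conj_struct (g : F2) :
    ∃ t ρ, ρ ∈ rots ∧ (g * kappa * g⁻¹).toWord = t ++ ρ ++ invRev t :=
  conj_struct_aux _ g le_rfl

lemma fst_wd (l : List (Fin 2)) : (wd l).map Prod.fst = l := by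
  induction l with
  | nil => rfl
  | cons i l ih => simp [wd] at ih ⊢; exact ih

lemma wd_inj {l₁ l₂ : List (Fin 2)} (h : wd l₁ = wd l₂) : l₁ = l₂ := by
  rw [← fst_wd l₁, ← fst_wd l₂, h]

lemma snds_wd (l : List (Fin 2)) : (wd l).map Prod.snd = List.replicate l.length true := by
  induction l with
  | nil => rfl
  | cons i l ih => simp [wd, List.replicate_succ] at ih ⊢; exact ih

lemma nf_true (i : Fin 2) : nf (i, true) = (i, false) := rfl

lemma snds_invRev_wd (l : List (Fin 2)) :
    ((invRev (wd l)).map Prod.snd) = List.replicate l.length false := by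
  induction l with
  | nil => rfl
  | cons i l ih =>
    have : wd (i :: l) = (i, true) :: wd l := rfl
    rw [this, invRev_cons, nf_true, List.map_append, ih]
    simp [List.replicate_succ']

lemma count_snd_invRev (t : Lw) :
    ((invRev t).map Prod.snd).count true = (t.map Prod.snd).count false := by
  induction t with
  | nil => rfl
  | cons p t ih =>
    rw [invRev_cons, List.map_append, List.count_append, ih]
    cases hp : p.2 <;> simp [nf, hp, List.count_cons]

lemma count_true_false (l : List Bool) : l.count true + l.count false = l.length := by
  induction l with
  | nil => rfl
  | cons x l ih => cases x <;> simp [List.count_cons] <;> omega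

def D (x y : Bool) : Prop := x = true ∨ y = false

lemma chainD (i j : ℕ) :
    List.Chain' D (List.replicate i true ++ List.replicate j false) := by
  rw [List.Chain', List.isChain_append]
  refine ⟨?_, ?_, ?_⟩
  · apply List.Pairwise.isChain
    apply List.pairwise_of_forall_mem_list
    intro x hx y _
    exact Or.inl (List.eq_of_mem_replicate hx)
  · apply List.Pairwise.isChain
    apply List.pairwise_of_forall_mem_list
    intro x _ y hy
    exact Or.inr (List.eq_of_mem_replicate hy)
  · intro x hx y _
    exact Or.inl (List.eq_of_mem_replicate (List.mem_of_mem_getLast? hx))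

lemma noFT {l : List Bool} (hl : List.Chain' D l) (h : [false, true] <:+: l) : False := by
  have h2 := hl.infix h
  rcases List.isChain_cons_cons.mp h2 with ⟨h3, -⟩
  rcases h3 with h4 | h4 <;> simp at h4

lemma eq_wd_of_snds_true : ∀ {t : Lw}, t.map Prod.snd = List.replicate t.length true →
    t = wd (t.map Prod.fst) := by
  intro t
  induction t with
  | nil => intro _; rfl
  | cons p t ih =>
    intro h
    rw [List.map_cons, List.length_cons, List.replicate_succ] at h
    obtain ⟨h1, h2⟩ := List.cons_eq_cons.mp h
    have := ih h2
    rw [List.map_cons]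
    show p :: t = (p.1, true) :: wd (t.map Prod.fst)
    rw [← this, ← h1]

lemma key_base {lu lv : List (Fin 2)} {h : F2}
    (hpre : ∃ p x y t₁ t₂, x ≠ y ∧ lu = p ++ x :: t₁ ∧ lv = p ++ y :: t₂)
    (hsuf : ∃ s x y t₁ t₂, x ≠ y ∧ lu = t₁ ++ [x] ++ s ∧ lv = t₂ ++ [y] ++ s)
    (hcomm : pos lu * pos lv * (pos lu)⁻¹ * (pos lv)⁻¹ = h * kappa * h⁻¹) :
    lu = [0] ∧ lv = [1] := by
  classical
  obtain ⟨p, x₁, y₁, lu₁', lv₁', hxy1, hu1, hv1⟩ := hpre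
  obtain ⟨s, x₂, y₂, lu₂', lv₂', hxy2, hu2, hv2⟩ := hsuf
  obtain ⟨lu₁, hlu₁⟩ : ∃ l : List (Fin 2), l = x₁ :: lu₁' := ⟨_, rfl⟩
  obtain ⟨lv₁, hlv₁⟩ : ∃ l : List (Fin 2), l = y₁ :: lv₁' := ⟨_, rfl⟩
  obtain ⟨lu₂, hlu₂⟩ : ∃ l : List (Fin 2), l = lu₂' ++ [x₂] := ⟨_, rfl⟩
  obtain ⟨lv₂, hlv₂⟩ : ∃ l : List (Fin 2), l = lv₂' ++ [y₂] := ⟨_, rfl⟩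
  rw [← hlu₁] at hu1
  rw [← hlv₁] at hv1
  have hu2' : lu = lu₂ ++ s := by rw [hu2, hlu₂, List.append_assoc]
  have hv2' : lv = lv₂ ++ s := by rw [hv2, hlv₂, List.append_assoc]
  obtain ⟨P, hP⟩ : ∃ l : List (Fin 2), l = lu₁ ++ lv₂ := ⟨_, rfl⟩
  obtain ⟨Q, hQ⟩ : ∃ l : List (Fin 2), l = lv₁ ++ lu₂ := ⟨_, rfl⟩
  obtain ⟨W, hWdef⟩ : ∃ l : Lw, l = wd P ++ invRev (wd Q) := ⟨_, rfl⟩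
  -- the element equality
  have e1 : pos lu = pos p * pos lu₁ := by rw [hu1, pos_append]
  have e2 : pos lu = pos lu₂ * pos s := by rw [hu2', pos_append]
  have e3 : pos lv = pos p * pos lv₁ := by rw [hv1, pos_append]
  have e4 : pos lv = pos lv₂ * pos s := by rw [hv2', pos_append]
  have hmkW : FreeGroup.mk W = pos P * (pos Q)⁻¹ := by
    rw [hWdef, ← mul_mk, mk_invRev]; rfl
  have hXW : (pos p)⁻¹ * (h * kappa * h⁻¹) * pos p = FreeGroup.mk W := by
    rw [← hcomm, hmkW]
    have step : (pos p)⁻¹ * (pos lu * pos lv * (pos lu)⁻¹ * (pos lv)⁻¹) * pos p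
        = ((pos p)⁻¹ * pos lu) * (pos lv * (pos lu)⁻¹) * ((pos lv)⁻¹ * pos p) := by group
    have f1 : (pos p)⁻¹ * pos lu = pos lu₁ := by rw [e1]; group
    have f2 : pos lv * (pos lu)⁻¹ = pos lv₂ * (pos lu₂)⁻¹ := by rw [e4, e2]; group
    have f3 : (pos lv)⁻¹ * pos p = (pos lv₁)⁻¹ := by rw [e3]; group
    have g1 : pos P = pos lu₁ * pos lv₂ := by rw [hP, pos_append]
    have g2 : pos Q = pos lv₁ * pos lu₂ := by rw [hQ, pos_append]
    rw [step, f1, f2, f3, g1, g2]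
    group
  -- reducedness of W
  have hWred : IsRed W := by
    rw [hWdef, IsRed, List.Chain', List.isChain_append]
    refine ⟨isRed_wd P, isRed_invRev_wd Q, ?_⟩
    intro x hx y hy
    have hxval : x = (y₂, true) := by
      have h9 : (wd P).getLast? = some (y₂, true) := by
        rw [hP, hlv₂, ← List.append_assoc, wd_append]
        show (wd (lu₁ ++ lv₂') ++ [(y₂, true)]).getLast? = _
        exact List.getLast?_concat
      rw [h9] at hx; exact Option.some_inj.mp hx.symm
    have hyval : y = (x₂, false) := by
      have h9 : (invRev (wd Q)).head? = some (x₂, false) := by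
        rw [hQ, hlu₂, ← List.append_assoc, wd_append, invRev_append]
        show (invRev [(x₂, true)] ++ invRev (wd (lv₁ ++ lu₂'))).head? = _
        rw [invRev_singleton, nf_true]
        rfl
      rw [h9] at hy; exact Option.some_inj.mp hy.symm
    subst hxval hyval
    simp only [not_and]
    intro hfst
    exact absurd hfst.symm hxy2
  have htW : ((pos p)⁻¹ * (h * kappa * h⁻¹) * pos p).toWord = W := by
    rw [hXW]; exact toWord_mk_red hWred
  -- conjugate structure
  obtain ⟨t, ρ, hρ, hT⟩ := conj_struct ((pos p)⁻¹ * h)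
  have hgr : ((pos p)⁻¹ * h) * kappa * ((pos p)⁻¹ * h)⁻¹
      = (pos p)⁻¹ * (h * kappa * h⁻¹) * pos p := by group
  have hWT : W = t ++ ρ ++ invRev t := by rw [← htW, ← hgr, hT]
  -- bools of W
  have hsnds : W.map Prod.snd
      = List.replicate P.length true ++ List.replicate Q.length false := by
    rw [hWdef, List.map_append, snds_wd, snds_invRev_wd]
  have hchain : List.Chain' D (W.map Prod.snd) := by rw [hsnds]; exact chainD _ _
  have hρ4 : ρ = kw ∨ ρ = r1 ∨ ρ = r2 ∨ ρ = r3 := by simpa [rots] using hρ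
  -- ρ must be kw
  have hρkw : ρ = kw := by
    rcases hρ4 with rfl | rfl | rfl | rfl
    · rfl
    · exfalso
      apply noFT hchain
      refine ⟨t.map Prod.snd ++ [true, false], (invRev t).map Prod.snd, ?_⟩
      rw [hWT, List.map_append, List.map_append]
      simp [r1]
    · exfalso
      apply noFT hchain
      refine ⟨t.map Prod.snd ++ [false], [true] ++ (invRev t).map Prod.snd, ?_⟩
      rw [hWT, List.map_append, List.map_append]
      simp [r2]
    · exfalso
      apply noFT hchain
      refine ⟨t.map Prod.snd, [true, false] ++ (invRev t).map Prod.snd, ?_⟩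
      rw [hWT, List.map_append, List.map_append]
      simp [r3]
  subst hρkw
  -- length of P
  have hPlen : P.length = t.length + 2 := by
    have c1 : (W.map Prod.snd).count true = P.length := by
      rw [hsnds, List.count_append]
      simp [List.count_replicate]
    have c2 : (W.map Prod.snd).count true = t.length + 2 := by
      rw [hWT, List.map_append, List.map_append, List.count_append, List.count_append]
      rw [count_snd_invRev]
      have h7 : (kw.map Prod.snd).count true = 2 := by decide
      rw [h7]
      have h8 := count_true_false (t.map Prod.snd)
      have hlen : (t.map Prod.snd).length = t.length := List.length_map _
      omega
    omega
  -- t is all positive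
  have hmst : t.map Prod.snd = List.replicate t.length true := by
    have h1 : t.map Prod.snd = (W.map Prod.snd).take t.length := by
      rw [hWT, List.map_append, List.map_append, List.append_assoc]
      rw [List.take_append_of_le_length (by simp)]
      simp
    rw [h1, hsnds, List.take_append_of_le_length (by simp [hPlen]), List.take_replicate]
    congr 1
    omega
  have htwd : t = wd (t.map Prod.fst) := eq_wd_of_snds_true hmst
  obtain ⟨tp, htp⟩ : ∃ l : List (Fin 2), l = t.map Prod.fst := ⟨_, rfl⟩
  rw [← htp] at htwd
  -- rewrite RHS as wd/invRev of extended lists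
  have hrhs : t ++ kw ++ invRev t = wd (tp ++ [0, 1]) ++ invRev (wd (tp ++ [1, 0])) := by
    rw [wd_append, wd_append, invRev_append, ← htwd]
    show t ++ kw ++ invRev t = (t ++ [(0, true), (1, true)]) ++ (invRev [(1,true),(0,true)] ++ invRev t)
    have h9 : invRev [((1 : Fin 2), true), (0, true)] = [(0, false), (1, false)] := rfl
    rw [h9]
    simp [kw]
  have hWT2 : wd P ++ invRev (wd Q) = wd (tp ++ [0, 1]) ++ invRev (wd (tp ++ [1, 0])) := by
    rw [← hrhs, ← hWT, hWdef]
  have hlen1 : (wd P).length = (wd (tp ++ [0, 1])).length := by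
    simp [wd, hPlen, htp]
  obtain ⟨hE1w, hE2w⟩ := List.append_inj hWT2 hlen1
  have hE1 : lu₁ ++ lv₂ = tp ++ [0, 1] := by rw [← hP]; exact wd_inj hE1w
  have hE2 : lv₁ ++ lu₂ = tp ++ [1, 0] := by rw [← hQ]; exact wd_inj (invRev_injective hE2w)
  rw [hlu₁, hlv₂] at hE1
  rw [hlv₁, hlu₂] at hE2
  -- tp must be empty
  cases htpc : tp with
  | cons c tp' =>
    rw [htpc] at hE1 hE2
    have hx1 : x₁ = c := by
      have := congrArg List.head? hE1
      simpa using this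
    have hy1 : y₁ = c := by
      have := congrArg List.head? hE2
      simpa using this
    exact absurd (hx1.trans hy1.symm) hxy1
  | nil =>
    rw [htpc] at hE1 hE2
    simp only [List.nil_append] at hE1 hE2
    -- hE1 : x₁ :: (lu₁' ++ lv₂' ++ [y₂]) = [0, 1] (up to assoc)
    have hlen1' : lu₁'.length = 0 ∧ lv₂'.length = 0 := by
      have := congrArg List.length hE1
      simp at this
      omega
    have hlen2' : lv₁'.length = 0 ∧ lu₂'.length = 0 := by
      have := congrArg List.length hE2
      simp at this
      omega
    have hlu₁'nil : lu₁' = [] := List.length_eq_zero_iff.mp hlen1'.1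
    have hlv₂'nil : lv₂' = [] := List.length_eq_zero_iff.mp hlen1'.2
    have hlv₁'nil : lv₁' = [] := List.length_eq_zero_iff.mp hlen2'.1
    have hlu₂'nil : lu₂' = [] := List.length_eq_zero_iff.mp hlen2'.2
    rw [hlu₁'nil, hlv₂'nil] at hE1
    rw [hlv₁'nil, hlu₂'nil] at hE2
    simp only [List.nil_append] at hE1 hE2
    -- hE1 : [x₁, y₂] = [0,1], hE2 : [y₁, x₂] = [1,0]
    have hE1' : x₁ = 0 ∧ y₂ = 1 := by
      have := hE1
      simp [List.cons_eq_cons] at this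
      exact this
    have hE2' : y₁ = 1 ∧ x₂ = 0 := by
      have := hE2
      simp [List.cons_eq_cons] at this
      exact this
    have hLu1 : lu₁ = [0] := by rw [hlu₁, hlu₁'nil, hE1'.1]
    have hLv1 : lv₁ = [1] := by rw [hlv₁, hlv₁'nil, hE2'.1]
    rw [hLu1] at hu1
    rw [hLv1] at hv1
    rw [hlu₂'nil, hE2'.2] at hu2
    rw [hlv₂'nil, hE1'.2] at hv2
    simp only [List.nil_append] at hu2 hv2
    -- hu1 : lu = p ++ [0], hu2 : lu = [0] ++ s, etc.
    cases hpc : p with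
    | cons c p' =>
      rw [hpc] at hu1 hv1
      have hc0 : c = 0 := by
        have h5 : lu = c :: (p' ++ [0]) := by simpa using hu1
        have h6 : lu = 0 :: s := by simpa using hu2
        rw [h5] at h6
        exact (List.cons_eq_cons.mp h6).1
      have hc1 : c = 1 := by
        have h5 : lv = c :: (p' ++ [1]) := by simpa using hv1
        have h6 : lv = 1 :: s := by simpa using hv2
        rw [h5] at h6
        exact (List.cons_eq_cons.mp h6).1
      rw [hc0] at hc1
      exact absurd hc1 (by decide)
    | nil =>
      rw [hpc] at hu1 hv1
      simp only [List.nil_append] at hu1 hv1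
      exact ⟨hu1, hv1⟩

lemma kappa_ne_one : kappa ≠ 1 := by decide

lemma lcp : ∀ (l₁ l₂ : List (Fin 2)), l₁ <+: l₂ ∨ l₂ <+: l₁ ∨
    ∃ p x y t₁ t₂, x ≠ y ∧ l₁ = p ++ x :: t₁ ∧ l₂ = p ++ y :: t₂ := by
  intro l₁
  induction l₁ with
  | nil => intro l₂; exact Or.inl List.nil_prefix
  | cons x t ih =>
    intro l₂
    cases l₂ with
    | nil => exact Or.inr (Or.inl List.nil_prefix)
    | cons y t₂ =>
      by_cases hxy : x = y
      · subst hxy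
        rcases ih t₂ with h | h | ⟨p, x', y', t₁', t₂', hne, h1, h2⟩
        · exact Or.inl (List.cons_prefix_cons.mpr ⟨rfl, h⟩)
        · exact Or.inr (Or.inl (List.cons_prefix_cons.mpr ⟨rfl, h⟩))
        · exact Or.inr (Or.inr ⟨x :: p, x', y', t₁', t₂', hne, by rw [h1]; rfl, by rw [h2]; rfl⟩)
      · exact Or.inr (Or.inr ⟨[], x, y, t, t₂, hxy, rfl, rfl⟩)

lemma lcs (l₁ l₂ : List (Fin 2)) : l₁ <:+ l₂ ∨ l₂ <:+ l₁ ∨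
    ∃ s x y t₁ t₂, x ≠ y ∧ l₁ = t₁ ++ [x] ++ s ∧ l₂ = t₂ ++ [y] ++ s := by
  rcases lcp l₁.reverse l₂.reverse with h | h | ⟨p, x, y, t₁, t₂, hne, h1, h2⟩
  · exact Or.inl (by rwa [List.reverse_prefix] at h)
  · exact Or.inr (Or.inl (by rwa [List.reverse_prefix] at h))
  · right; right
    refine ⟨p.reverse, x, y, t₁.reverse, t₂.reverse, hne, ?_, ?_⟩
    · have h3 := congrArg List.reverse h1
      rw [List.reverse_reverse] at h3
      rw [h3]
      simp
    · have h3 := congrArg List.reverse h2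
      rw [List.reverse_reverse] at h3
      rw [h3]
      simp

lemma T1_a : T1hat a = a * b := by
  show (FreeGroup.lift fun i => if i = 0 then a * b else b) (FreeGroup.of 0) = a * b
  rw [FreeGroup.lift_apply_of]
  simp

lemma T1_b : T1hat b = b := by
  show (FreeGroup.lift fun i => if i = 0 then a * b else b) (FreeGroup.of 1) = b
  rw [FreeGroup.lift_apply_of]
  simp

lemma T2_a : T2hat a = a := by
  show (FreeGroup.lift fun i => if i = 0 then a else b * a) (FreeGroup.of 0) = a
  rw [FreeGroup.lift_apply_of]
  simp

lemma T2_b : T2hat b = b * a := by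
  show (FreeGroup.lift fun i => if i = 0 then a else b * a) (FreeGroup.of 1) = b * a
  rw [FreeGroup.lift_apply_of]
  simp

lemma prod_append_T (L' : List (Monoid.End F2)) (T : Monoid.End F2) (x : F2) :
    ((L' ++ [T]).prod : Monoid.End F2) x = L'.prod (T x) := by
  rw [List.prod_append, List.prod_singleton]
  rfl

lemma conj_one_absurd {h : F2} (hc : (1 : F2) = h * kappa * h⁻¹) : False := by
  apply kappa_ne_one
  calc kappa = h⁻¹ * (h * kappa * h⁻¹) * h := by group
    _ = h⁻¹ * 1 * h := by rw [← hc]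
    _ = 1 := by group

lemma main_ind : ∀ n : ℕ, ∀ lu lv : List (Fin 2), ∀ h : F2, lu.length + lv.length ≤ n →
    pos lu * pos lv * (pos lu)⁻¹ * (pos lv)⁻¹ = h * kappa * h⁻¹ →
    ∃ (g : F2) (L : List (Monoid.End F2)), (∀ ψ ∈ L, ψ = T1hat ∨ ψ = T2hat) ∧
      pos lu = g * (L.prod a) * g⁻¹ ∧ pos lv = g * (L.prod b) * g⁻¹ := by
  intro n
  induction n with
  | zero =>
    intro lu lv h hlen hcomm
    exfalso
    have h1 : lu = [] := List.length_eq_zero_iff.mp (by omega)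
    subst h1
    apply conj_one_absurd (h := h)
    rw [← hcomm, pos_nil]
    group
  | succ n ih =>
    intro lu lv h hlen hcomm
    have hne1 : lu ≠ [] := by
      rintro rfl
      apply conj_one_absurd (h := h)
      rw [← hcomm, pos_nil]
      group
    have hne2 : lv ≠ [] := by
      rintro rfl
      apply conj_one_absurd (h := h)
      rw [← hcomm, pos_nil]
      group
    have hnequv : lu ≠ lv := by
      rintro rfl
      apply conj_one_absurd (h := h)
      rw [← hcomm]
      group
    have hlupos : 0 < lu.length := List.length_pos_iff.mpr hne1
    have hlvpos : 0 < lv.length := List.length_pos_iff.mpr hne2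
    by_cases hs1 : lv <:+ lu
    · obtain ⟨lu', hlu'⟩ := hs1
      have hlen' : lu'.length + lv.length ≤ n := by
        have := congrArg List.length hlu'
        simp at this
        omega
      have hcomm' : pos lu' * pos lv * (pos lu')⁻¹ * (pos lv)⁻¹ = h * kappa * h⁻¹ := by
        rw [← hcomm, ← hlu', pos_append]
        group
      obtain ⟨g, L, hmem, hA, hB⟩ := ih lu' lv h hlen' hcomm'
      refine ⟨g, L ++ [T1hat], ?_, ?_, ?_⟩
      · intro ψ hψ
        rcases List.mem_append.mp hψ with h' | h'
        · exact hmem ψ h'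
        · left; simpa using h'
      · rw [prod_append_T, T1_a, _root_.map_mul, ← hlu', pos_append, hA, hB]
        group
      · rw [prod_append_T, T1_b]
        exact hB
    · by_cases hs2 : lv <+: lu
      · obtain ⟨lu'', hlu''⟩ := hs2
        have hlu''ne : lu'' ≠ [] := by
          rintro rfl
          simp at hlu''
          exact hnequv hlu''.symm
        have hlen' : lu''.length + lv.length ≤ n := by
          have := congrArg List.length hlu''
          simp at this
          omega
        have hsplit : pos lu = pos lv * pos lu'' := by rw [← hlu'', pos_append]
        have hcomm' : pos lu'' * pos lv * (pos lu'')⁻¹ * (pos lv)⁻¹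
            = ((pos lv)⁻¹ * h) * kappa * ((pos lv)⁻¹ * h)⁻¹ := by
          calc pos lu'' * pos lv * (pos lu'')⁻¹ * (pos lv)⁻¹
              = (pos lv)⁻¹ * (pos lv * pos lu'' * pos lv * (pos lv * pos lu'')⁻¹ * (pos lv)⁻¹) * pos lv := by
                group
            _ = (pos lv)⁻¹ * (pos lu * pos lv * (pos lu)⁻¹ * (pos lv)⁻¹) * pos lv := by
                rw [hsplit]
            _ = (pos lv)⁻¹ * (h * kappa * h⁻¹) * pos lv := by rw [hcomm]
            _ = ((pos lv)⁻¹ * h) * kappa * ((pos lv)⁻¹ * h)⁻¹ := by group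
        obtain ⟨g, L, hmem, hA, hB⟩ := ih lu'' lv ((pos lv)⁻¹ * h) hlen' hcomm'
        refine ⟨pos lv * g, L ++ [T1hat], ?_, ?_, ?_⟩
        · intro ψ hψ
          rcases List.mem_append.mp hψ with h' | h'
          · exact hmem ψ h'
          · left; simpa using h'
        · rw [prod_append_T, T1_a, _root_.map_mul, hsplit, hA, hB]
          group
        · rw [prod_append_T, T1_b, hB]
          group
      · by_cases hs3 : lu <:+ lv
        · obtain ⟨lv'', hlv''⟩ := hs3
          have hlv''ne : lv'' ≠ [] := by
            rintro rfl
            simp at hlv''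
            exact hnequv hlv''
          have hlen' : lu.length + lv''.length ≤ n := by
            have := congrArg List.length hlv''
            simp at this
            omega
          have hsplit : pos lv = pos lv'' * pos lu := by rw [← hlv'', pos_append]
          have hcomm' : pos lu * pos lv'' * (pos lu)⁻¹ * (pos lv'')⁻¹ = h * kappa * h⁻¹ := by
            rw [← hcomm, hsplit]
            group
          obtain ⟨g, L, hmem, hA, hB⟩ := ih lu lv'' h hlen' hcomm'
          refine ⟨g, L ++ [T2hat], ?_, ?_, ?_⟩
          · intro ψ hψ
            rcases List.mem_append.mp hψ with h' | h'
            · exact hmem ψ h'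
            · right; simpa using h'
          · rw [prod_append_T, T2_a]
            exact hA
          · rw [prod_append_T, T2_b, _root_.map_mul, hsplit, hA, hB]
            group
        · by_cases hs4 : lu <+: lv
          · obtain ⟨lv₃, hlv₃⟩ := hs4
            have hlv₃ne : lv₃ ≠ [] := by
              rintro rfl
              simp at hlv₃
              exact hnequv hlv₃
            have hlen' : lu.length + lv₃.length ≤ n := by
              have := congrArg List.length hlv₃
              simp at this
              omega
            have hsplit : pos lv = pos lu * pos lv₃ := by rw [← hlv₃, pos_append]
            have hcomm' : pos lu * pos lv₃ * (pos lu)⁻¹ * (pos lv₃)⁻¹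
                = ((pos lu)⁻¹ * h) * kappa * ((pos lu)⁻¹ * h)⁻¹ := by
              calc pos lu * pos lv₃ * (pos lu)⁻¹ * (pos lv₃)⁻¹
                  = (pos lu)⁻¹ * (pos lu * (pos lu * pos lv₃) * (pos lu)⁻¹ * (pos lu * pos lv₃)⁻¹) * pos lu := by
                    group
                _ = (pos lu)⁻¹ * (pos lu * pos lv * (pos lu)⁻¹ * (pos lv)⁻¹) * pos lu := by
                    rw [← hsplit]
                _ = (pos lu)⁻¹ * (h * kappa * h⁻¹) * pos lu := by rw [hcomm]
                _ = ((pos lu)⁻¹ * h) * kappa * ((pos lu)⁻¹ * h)⁻¹ := by group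
            obtain ⟨g, L, hmem, hA, hB⟩ := ih lu lv₃ ((pos lu)⁻¹ * h) hlen' hcomm'
            refine ⟨pos lu * g, L ++ [T2hat], ?_, ?_, ?_⟩
            · intro ψ hψ
              rcases List.mem_append.mp hψ with h' | h'
              · exact hmem ψ h'
              · right; simpa using h'
            · rw [prod_append_T, T2_a, hA]
              group
            · rw [prod_append_T, T2_b, _root_.map_mul, hsplit, hA, hB]
              group
          · -- no prefix/suffix relations: base case
            have hpre : ∃ p x y t₁ t₂, x ≠ y ∧ lu = p ++ x :: t₁ ∧ lv = p ++ y :: t₂ := by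
              rcases lcp lu lv with h' | h' | h'
              · exact absurd h' hs4
              · exact absurd h' hs2
              · exact h'
            have hsuf : ∃ s x y t₁ t₂, x ≠ y ∧ lu = t₁ ++ [x] ++ s ∧ lv = t₂ ++ [y] ++ s := by
              rcases lcs lu lv with h' | h' | h'
              · exact absurd h' hs3
              · exact absurd h' hs1
              · exact h'
            obtain ⟨h01, h02⟩ := key_base hpre hsuf hcomm
            subst h01
            subst h02
            refine ⟨1, [], by simp, ?_, ?_⟩
            · show pos [0] = 1 * ((1 : Monoid.End F2) a) * 1⁻¹
              rw [pos_singleton]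
              simp [a]
            · show pos [1] = 1 * ((1 : Monoid.End F2) b) * 1⁻¹
              rw [pos_singleton]
              simp [b]

lemma ispos_list {x : F2} (hx : IsPositiveWord x) : ∃ l, x = pos l := by
  induction hx using Submonoid.closure_induction with
  | mem y hmem =>
    rcases hmem with rfl | rfl
    · exact ⟨[0], rfl⟩
    · exact ⟨[1], rfl⟩
  | one => exact ⟨[], rfl⟩
  | mul y z _ _ ihy ihz =>
    obtain ⟨l₁, rfl⟩ := ihy
    obtain ⟨l₂, rfl⟩ := ihz
    exact ⟨l₁ ++ l₂, (pos_append _ _).symm⟩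

end AuxFG

/-- Every automorphism `φ` of `F₂` sending both generators to positive words and sending
the commutator `κ` to a conjugate of `κ` factors as `φ = c_g ∘ ψ`, where `ψ` is a finite
composition of copies of `T̂₁` and `T̂₂` and `c_g` is the inner automorphism
`x ↦ g·x·g⁻¹` for some `g ∈ F₂`. -/
theorem automorphism_positive_conjugating_kappa_eq_inner_comp
    (φ : Monoid.End F2) (hbij : Function.Bijective φ)
    (ha : IsPositiveWord (φ a)) (hb : IsPositiveWord (φ b))
    (hκ : ∃ h : F2, φ kappa = h * kappa * h⁻¹) :
    ∃ (g : F2) (L : List (Monoid.End F2)),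
      (∀ ψ ∈ L, ψ = T1hat ∨ ψ = T2hat) ∧
      ∀ x : F2, φ x = g * (L.prod x) * g⁻¹ := by
  obtain ⟨h, hφκ⟩ := hκ
  obtain ⟨lu, hlu⟩ := AuxFG.ispos_list ha
  obtain ⟨lv, hlv⟩ := AuxFG.ispos_list hb
  have hφκ' : AuxFG.pos lu * AuxFG.pos lv * (AuxFG.pos lu)⁻¹ * (AuxFG.pos lv)⁻¹
      = h * kappa * h⁻¹ := by
    rw [← hlu, ← hlv, ← hφκ, kappa]
    simp [map_mul, map_inv]
  obtain ⟨g, L, hmem, hA, hB⟩ :=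
    AuxFG.main_ind (lu.length + lv.length) lu lv h le_rfl hφκ'
  refine ⟨g, L, hmem, ?_⟩
  have hhom : (φ : F2 →* F2)
      = ((MulAut.conj g).toMonoidHom.comp (L.prod : Monoid.End F2)) := by
    apply FreeGroup.ext_hom
    intro i
    fin_cases i
    · show φ a = _
      rw [hlu, hA]
      simp [MulAut.conj_apply]
      rfl
    · show φ b = _
      rw [hlv, hB]
      simp [MulAut.conj_apply]
      rfl
  intro x
  have hx := DFunLike.congr_fun hhom x
  exact hx
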